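/- Let n ≥ 4, N = C(n−2,2), and let F̄_n ⊆ (ℂP^1)^N be the set of points ((c_{ij}:c'_{ij}))_{3 ≤ i < j ≤ n} satisfying c'_{ij}·c_{ik}·c'_{jk} = c_{ij}·c'_{ik}·c_{jk} for all 3 ≤ i < j < k ≤ n. Then F̄_n, with its subspace topology, is a compact topological space that admits the structure of a complex manifold of complex dimension n − 3 = C(n−2,2) − C(n−3,2) for which the inclusion F̄_n ↪ (ℂP^1)^N is a holomorphic embedding. -/

import Mathlib

open Projectivization

/-- The complex projective line `ℂP¹`. -/
abbrev CP1 : Type := Projectivization ℂ (Fin 2 → ℂ)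

/-- `ℂP¹` carries the quotient topology coming from `ℂ² ∖ {0}`. -/
noncomputable instance : TopologicalSpace CP1 :=
  inferInstanceAs (TopologicalSpace (Quotient (projectivizationSetoid ℂ (Fin 2 → ℂ))))

/-- The cubic relation `c'_{ij}·c_{ik}·c'_{jk} = c_{ij}·c'_{ik}·c_{jk}` for three points of
`ℂP¹`, expressed through homogeneous representatives (it is homogeneous of degree one in
each point, hence independent of the choice of representatives). -/
def cubicRel (x y z : CP1) : Prop :=
  Projectivization.rep x 1 * Projectivization.rep y 0 * Projectivization.rep z 1
    = Projectivization.rep x 0 * Projectivization.rep y 1 * Projectivization.rep z 0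

/-- Pairs `3 ≤ i < j ≤ n`; there are `N = C(n-2,2)` of them. -/
def PairIdx (n : ℕ) : Type := {p : ℕ × ℕ // 3 ≤ p.1 ∧ p.1 < p.2 ∧ p.2 ≤ n}

/-- The variety `F̄_n ⊆ (ℂP¹)^N` cut out by the cubic relations
`c'_{ij}·c_{ik}·c'_{jk} = c_{ij}·c'_{ik}·c_{jk}`, `3 ≤ i < j < k ≤ n`. -/
def FbarSet (n : ℕ) : Set (PairIdx n → CP1) :=
  {x | ∀ (i j k : ℕ) (h3 : 3 ≤ i) (hij : i < j) (hjk : j < k) (hkn : k ≤ n),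
      cubicRel (x ⟨(i, j), h3, hij, le_trans (le_of_lt hjk) hkn⟩)
               (x ⟨(i, k), h3, lt_trans hij hjk, hkn⟩)
               (x ⟨(j, k), le_trans h3 (le_of_lt hij), hjk, hkn⟩)}

/-- Given a charted-space structure on `F̄_n` modelled on `ℂ^{n-3}`, this says that it makes
`F̄_n` a complex manifold (of complex dimension `n-3`) and that the inclusion
`F̄_n ↪ (ℂP¹)^N` is holomorphic: for each of the `N` coordinates, both standard affine
readings `c'/c` and `c/c'` of that coordinate are holomorphic (complex-`MDifferentiable`)
on the locus where they are defined. -/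
def IsComplexManifoldStructureWithHolomorphicInclusion (n : ℕ)
    (cs : ChartedSpace (EuclideanSpace ℂ (Fin (n - 3))) ↥(FbarSet n)) : Prop := by
  letI := cs
  exact
    IsManifold
        (modelWithCornersSelf ℂ (EuclideanSpace ℂ (Fin (n - 3)))) (⊤ : ℕ∞) ↥(FbarSet n) ∧
    ∀ P : PairIdx n,
      MDifferentiableOn (modelWithCornersSelf ℂ (EuclideanSpace ℂ (Fin (n - 3))))
        (modelWithCornersSelf ℂ ℂ)
        (fun x : ↥(FbarSet n) =>
          Projectivization.rep (x.val P) 1 / Projectivization.rep (x.val P) 0)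
        {x : ↥(FbarSet n) | Projectivization.rep (x.val P) 0 ≠ 0} ∧
      MDifferentiableOn (modelWithCornersSelf ℂ (EuclideanSpace ℂ (Fin (n - 3))))
        (modelWithCornersSelf ℂ ℂ)
        (fun x : ↥(FbarSet n) =>
          Projectivization.rep (x.val P) 0 / Projectivization.rep (x.val P) 1)
        {x : ↥(FbarSet n) | Projectivization.rep (x.val P) 1 ≠ 0}

namespace S4

noncomputable section

/-- the vector (t, 1) -/
def vF (t : ℂ) : Fin 2 → ℂ := fun i => if i = 0 then t else 1
/-- the vector (1, s) -/
def vI (s : ℂ) : Fin 2 → ℂ := fun i => if i = 0 then 1 else s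

@[simp] lemma vF0 (t : ℂ) : vF t 0 = t := rfl
@[simp] lemma vF1 (t : ℂ) : vF t 1 = 1 := rfl
@[simp] lemma vI0 (s : ℂ) : vI s 0 = 1 := rfl
@[simp] lemma vI1 (s : ℂ) : vI s 1 = s := rfl

lemma vF_ne (t : ℂ) : vF t ≠ 0 := fun h => by
  have := congrFun h 1
  rw [vF1, Pi.zero_apply] at this
  exact one_ne_zero this
lemma vI_ne (s : ℂ) : vI s ≠ 0 := fun h => by
  have := congrFun h 0
  rw [vI0, Pi.zero_apply] at this
  exact one_ne_zero this

/-- point (t : 1) -/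
def ptF (t : ℂ) : CP1 := Projectivization.mk ℂ (vF t) (vF_ne t)
/-- point (1 : s) -/
def ptI (s : ℂ) : CP1 := Projectivization.mk ℂ (vI s) (vI_ne s)

lemma rep_mk (v : Fin 2 → ℂ) (hv : v ≠ 0) :
    ∃ a : ℂˣ, (Projectivization.mk ℂ v hv).rep = a • v := by
  obtain ⟨a, ha⟩ := Projectivization.exists_smul_eq_mk_rep ℂ v hv
  exact ⟨a, ha.symm⟩

lemma rep_ptF (t : ℂ) : ∃ a : ℂ, a ≠ 0 ∧ (ptF t).rep 0 = a * t ∧ (ptF t).rep 1 = a := by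
  obtain ⟨a, ha⟩ := rep_mk (vF t) (vF_ne t)
  exact ⟨a, a.ne_zero, by simp [ptF, ha, Pi.smul_apply, Units.smul_def],
    by simp [ptF, ha, Pi.smul_apply, Units.smul_def]⟩

lemma rep_ptI (s : ℂ) : ∃ a : ℂ, a ≠ 0 ∧ (ptI s).rep 0 = a ∧ (ptI s).rep 1 = a * s := by
  obtain ⟨a, ha⟩ := rep_mk (vI s) (vI_ne s)
  exact ⟨a, a.ne_zero, by simp [ptI, ha, Pi.smul_apply, Units.smul_def],
    by simp [ptI, ha, Pi.smul_apply, Units.smul_def]⟩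

/-- affine reading c/c' -/
def ratio01 (p : CP1) : ℂ := p.rep 0 / p.rep 1
/-- affine reading c'/c -/
def ratio10 (p : CP1) : ℂ := p.rep 1 / p.rep 0

lemma ratio01_mk (v : Fin 2 → ℂ) (hv : v ≠ 0) :
    ratio01 (Projectivization.mk ℂ v hv) = v 0 / v 1 := by
  obtain ⟨a, ha⟩ := rep_mk v hv
  simp [ratio01, ha, Pi.smul_apply, Units.smul_def,
    mul_div_mul_left _ _ (a.ne_zero : (a:ℂ) ≠ 0)]

lemma ratio10_mk (v : Fin 2 → ℂ) (hv : v ≠ 0) :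
    ratio10 (Projectivization.mk ℂ v hv) = v 1 / v 0 := by
  obtain ⟨a, ha⟩ := rep_mk v hv
  simp [ratio10, ha, Pi.smul_apply, Units.smul_def,
    mul_div_mul_left _ _ (a.ne_zero : (a:ℂ) ≠ 0)]

@[simp] lemma ratio01_ptF (t : ℂ) : ratio01 (ptF t) = t := by
  simp [ptF, ratio01_mk]
@[simp] lemma ratio10_ptF (t : ℂ) : ratio10 (ptF t) = t⁻¹ := by
  simp [ptF, ratio10_mk, one_div]
@[simp] lemma ratio01_ptI (s : ℂ) : ratio01 (ptI s) = s⁻¹ := by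
  simp [ptI, ratio01_mk, one_div]
@[simp] lemma ratio10_ptI (s : ℂ) : ratio10 (ptI s) = s := by
  simp [ptI, ratio10_mk]

lemma rep1_ne_iff (v : Fin 2 → ℂ) (hv : v ≠ 0) :
    (Projectivization.mk ℂ v hv).rep 1 ≠ 0 ↔ v 1 ≠ 0 := by
  obtain ⟨a, ha⟩ := rep_mk v hv
  simp [ha, Pi.smul_apply, Units.smul_def, a.ne_zero]

lemma rep0_ne_iff (v : Fin 2 → ℂ) (hv : v ≠ 0) :
    (Projectivization.mk ℂ v hv).rep 0 ≠ 0 ↔ v 0 ≠ 0 := by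
  obtain ⟨a, ha⟩ := rep_mk v hv
  simp [ha, Pi.smul_apply, Units.smul_def, a.ne_zero]

lemma rep_ne_or (p : CP1) : p.rep 0 ≠ 0 ∨ p.rep 1 ≠ 0 := by
  by_contra h
  push_neg at h
  apply p.rep_nonzero
  funext i
  fin_cases i <;> simp [h.1, h.2]

/-- reconstruct a point with nonzero second coordinate -/
lemma ptF_ratio (p : CP1) (h : p.rep 1 ≠ 0) : ptF (ratio01 p) = p := by
  conv_rhs => rw [← p.mk_rep]
  refine (Projectivization.mk_eq_mk_iff' ℂ _ _ _ _).2 ⟨(p.rep 1)⁻¹, funext fun i => ?_⟩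
  simp only [Pi.smul_apply, smul_eq_mul]
  fin_cases i
  · show (p.rep 1)⁻¹ * p.rep 0 = vF (ratio01 p) 0
    rw [vF0, ratio01, div_eq_inv_mul]
  · show (p.rep 1)⁻¹ * p.rep 1 = vF (ratio01 p) 1
    rw [vF1, inv_mul_cancel₀ h]

lemma ptI_ratio (p : CP1) (h : p.rep 0 ≠ 0) : ptI (ratio10 p) = p := by
  conv_rhs => rw [← p.mk_rep]
  refine (Projectivization.mk_eq_mk_iff' ℂ _ _ _ _).2 ⟨(p.rep 0)⁻¹, funext fun i => ?_⟩
  simp only [Pi.smul_apply, smul_eq_mul]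
  fin_cases i
  · show (p.rep 0)⁻¹ * p.rep 0 = vI (ratio10 p) 0
    rw [vI0, inv_mul_cancel₀ h]
  · show (p.rep 0)⁻¹ * p.rep 1 = vI (ratio10 p) 1
    rw [vI1, ratio10, div_eq_inv_mul]


/-! ### Topology of CP1 -/

/-- the quotient map -/
def mkc (w : {v : Fin 2 → ℂ // v ≠ 0}) : CP1 := Projectivization.mk ℂ w.1 w.2

lemma mkc_eq_quotient_mk : mkc = @Quotient.mk' _ (projectivizationSetoid ℂ (Fin 2 → ℂ)) := rfl

lemma continuous_mkc : Continuous mkc := continuous_quotient_mk'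

lemma isQuotientMap_mkc : Topology.IsQuotientMap mkc := isQuotientMap_quotient_mk'

lemma surjective_mkc : Function.Surjective mkc := Quotient.mk''_surjective

lemma smul_ne (a : ℂˣ) (w : {v : Fin 2 → ℂ // v ≠ 0}) : (a : ℂ) • w.1 ≠ 0 :=
  smul_ne_zero (a.ne_zero) w.2

lemma mkc_smul (a : ℂˣ) (w : {v : Fin 2 → ℂ // v ≠ 0}) :
    mkc ⟨(a : ℂ) • w.1, smul_ne a w⟩ = mkc w := by
  refine (Projectivization.mk_eq_mk_iff ℂ _ _ _ _).2 ⟨a, rfl⟩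

lemma isOpenMap_mkc : IsOpenMap mkc := by
  intro U hU
  rw [← isQuotientMap_mkc.isOpen_preimage]
  have : mkc ⁻¹' (mkc '' U) =
      ⋃ a : ℂˣ, (fun w : {v : Fin 2 → ℂ // v ≠ 0} =>
        (⟨(a : ℂ) • w.1, smul_ne a w⟩ : {v : Fin 2 → ℂ // v ≠ 0})) ⁻¹' U := by
    ext w
    constructor
    · rintro ⟨u, hu, huw⟩
      obtain ⟨a, ha⟩ := (Projectivization.mk_eq_mk_iff ℂ _ _ u.2 w.2).1 huw
      refine Set.mem_iUnion.2 ⟨a, ?_⟩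
      show (⟨(a : ℂ) • w.1, _⟩ : {v : Fin 2 → ℂ // v ≠ 0}) ∈ U
      have : (⟨(a : ℂ) • w.1, smul_ne a w⟩ : {v : Fin 2 → ℂ // v ≠ 0}) = u :=
        Subtype.ext ha
      rwa [this]
    · intro hw
      obtain ⟨a, ha⟩ := Set.mem_iUnion.1 hw
      exact ⟨_, ha, mkc_smul a w⟩
  rw [this]
  refine isOpen_iUnion fun a => hU.preimage ?_
  exact ((continuous_subtype_val (p := fun v : Fin 2 → ℂ => v ≠ 0)).const_smul (a : ℂ)).subtype_mk _

/-- Continuity criterion through an open quotient-like map. -/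
lemma contOn_of_openMap {X Y Z : Type*} [TopologicalSpace X] [TopologicalSpace Y]
    [TopologicalSpace Z] {q : X → Y} (hq : Continuous q) (ho : IsOpenMap q)
    (hs : Function.Surjective q) {f : Y → Z} {U : Set Y} (hU : IsOpen U)
    (h : ContinuousOn (f ∘ q) (q ⁻¹' U)) : ContinuousOn f U := by
  intro y hy
  obtain ⟨x, rfl⟩ := hs y
  have hx : x ∈ q ⁻¹' U := hy
  have hca : ContinuousAt (f ∘ q) x :=
    (h x hx).continuousAt ((hU.preimage hq).mem_nhds hx)
  refine ContinuousWithinAt.mono ?_ (Set.subset_univ U)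
  rw [continuousWithinAt_univ]
  intro A hA
  obtain ⟨B, hBA, hBopen, hxB⟩ := mem_nhds_iff.1 (hca hA)
  refine mem_nhds_iff.2 ⟨q '' B, ?_, ho B hBopen, ⟨x, hxB, rfl⟩⟩
  rintro _ ⟨x', hx', rfl⟩
  exact hBA hx'

lemma isOpen_rep1_ne : IsOpen {p : CP1 | p.rep 1 ≠ 0} := by
  rw [← isQuotientMap_mkc.isOpen_preimage]
  have : mkc ⁻¹' {p : CP1 | p.rep 1 ≠ 0} = {w : {v : Fin 2 → ℂ // v ≠ 0} | w.1 1 ≠ 0} := by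
    ext w; exact rep1_ne_iff w.1 w.2
  rw [this]
  exact isOpen_compl_singleton.preimage ((continuous_apply 1).comp continuous_subtype_val)

lemma isOpen_rep0_ne : IsOpen {p : CP1 | p.rep 0 ≠ 0} := by
  rw [← isQuotientMap_mkc.isOpen_preimage]
  have : mkc ⁻¹' {p : CP1 | p.rep 0 ≠ 0} = {w : {v : Fin 2 → ℂ // v ≠ 0} | w.1 0 ≠ 0} := by
    ext w; exact rep0_ne_iff w.1 w.2
  rw [this]
  exact isOpen_compl_singleton.preimage ((continuous_apply 0).comp continuous_subtype_val)

lemma continuousOn_ratio01 : ContinuousOn ratio01 {p : CP1 | p.rep 1 ≠ 0} := by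
  refine contOn_of_openMap continuous_mkc isOpenMap_mkc surjective_mkc isOpen_rep1_ne ?_
  have hset : mkc ⁻¹' {p : CP1 | p.rep 1 ≠ 0} = {w : {v : Fin 2 → ℂ // v ≠ 0} | w.1 1 ≠ 0} := by
    ext w; exact rep1_ne_iff w.1 w.2
  rw [hset]
  refine ContinuousOn.congr (f := fun w : {v : Fin 2 → ℂ // v ≠ 0} => w.1 0 / w.1 1) ?_ ?_
  · exact ContinuousOn.div
      ((continuous_apply 0).comp continuous_subtype_val).continuousOn
      ((continuous_apply 1).comp continuous_subtype_val).continuousOn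
      (fun w hw => hw)
  · intro w hw
    exact ratio01_mk w.1 w.2

lemma continuousOn_ratio10 : ContinuousOn ratio10 {p : CP1 | p.rep 0 ≠ 0} := by
  refine contOn_of_openMap continuous_mkc isOpenMap_mkc surjective_mkc isOpen_rep0_ne ?_
  have hset : mkc ⁻¹' {p : CP1 | p.rep 0 ≠ 0} = {w : {v : Fin 2 → ℂ // v ≠ 0} | w.1 0 ≠ 0} := by
    ext w; exact rep0_ne_iff w.1 w.2
  rw [hset]
  refine ContinuousOn.congr (f := fun w : {v : Fin 2 → ℂ // v ≠ 0} => w.1 1 / w.1 0) ?_ ?_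
  · exact ContinuousOn.div
      ((continuous_apply 1).comp continuous_subtype_val).continuousOn
      ((continuous_apply 0).comp continuous_subtype_val).continuousOn
      (fun w hw => hw)
  · intro w hw
    exact ratio10_mk w.1 w.2


/-! ### cubicRel through representatives -/

lemma cubicRel_mk {x y z : Fin 2 → ℂ} (hx : x ≠ 0) (hy : y ≠ 0) (hz : z ≠ 0) :
    cubicRel (Projectivization.mk ℂ x hx) (Projectivization.mk ℂ y hy)
      (Projectivization.mk ℂ z hz) ↔ x 1 * y 0 * z 1 = x 0 * y 1 * z 0 := by
  obtain ⟨a, ha⟩ := rep_mk x hx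
  obtain ⟨b, hb⟩ := rep_mk y hy
  obtain ⟨c, hc⟩ := rep_mk z hz
  unfold cubicRel
  rw [ha, hb, hc]
  simp only [Pi.smul_apply, Units.smul_def, smul_eq_mul]
  constructor
  · intro h
    have habc : (a : ℂ) * b * c ≠ 0 :=
      mul_ne_zero (mul_ne_zero a.ne_zero b.ne_zero) c.ne_zero
    apply mul_left_cancel₀ habc
    linear_combination h
  · intro h
    linear_combination ((a : ℂ) * b * c) * h

/-! ### Finiteness of the index set -/

instance pairIdxFinite (n : ℕ) : Finite (PairIdx n) := by
  refine Finite.of_injective (fun P : PairIdx n =>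
    ((⟨P.1.1, by obtain ⟨h1, h2, h3⟩ := P.2; omega⟩ : Fin (n + 1)),
     (⟨P.1.2, by obtain ⟨h1, h2, h3⟩ := P.2; omega⟩ : Fin (n + 1)))) ?_
  intro P Q h
  simp only [Prod.mk.injEq, Fin.mk.injEq] at h
  exact Subtype.ext (Prod.ext h.1 h.2)

/-! ### Compactness -/

lemma sphere_pt_ne (w : Metric.sphere (0 : Fin 2 → ℂ) 1) : (w : Fin 2 → ℂ) ≠ 0 := by
  intro h
  have := Metric.mem_sphere.mp w.2
  rw [h] at this
  simp at this

theorem isCompact_FbarSet (n : ℕ) : IsCompact (FbarSet n) := by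
  classical
  set Sph := Metric.sphere (0 : Fin 2 → ℂ) 1 with hSph
  set S : Set (PairIdx n → Sph) :=
    {v | ∀ (i j k : ℕ) (h3 : 3 ≤ i) (hij : i < j) (hjk : j < k) (hkn : k ≤ n),
      (v ⟨(i, j), h3, hij, le_trans (le_of_lt hjk) hkn⟩ : Fin 2 → ℂ) 1 *
        (v ⟨(i, k), h3, lt_trans hij hjk, hkn⟩ : Fin 2 → ℂ) 0 *
        (v ⟨(j, k), le_trans h3 (le_of_lt hij), hjk, hkn⟩ : Fin 2 → ℂ) 1
      = (v ⟨(i, j), h3, hij, le_trans (le_of_lt hjk) hkn⟩ : Fin 2 → ℂ) 0 *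
        (v ⟨(i, k), h3, lt_trans hij hjk, hkn⟩ : Fin 2 → ℂ) 1 *
        (v ⟨(j, k), le_trans h3 (le_of_lt hij), hjk, hkn⟩ : Fin 2 → ℂ) 0} with hS
  have hc : ∀ (P : PairIdx n) (i : Fin 2),
      Continuous (fun v : PairIdx n → Sph => (v P : Fin 2 → ℂ) i) := fun P i =>
    (continuous_apply i).comp (continuous_subtype_val.comp (continuous_apply P))
  have hSclosed : IsClosed S := by
    rw [hS]
    simp only [Set.setOf_forall]
    refine isClosed_iInter fun i => isClosed_iInter fun j => isClosed_iInter fun k =>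
      isClosed_iInter fun h3 => isClosed_iInter fun hij => isClosed_iInter fun hjk =>
      isClosed_iInter fun hkn => isClosed_eq ?_ ?_
    · exact ((hc _ _).mul (hc _ _)).mul (hc _ _)
    · exact ((hc _ _).mul (hc _ _)).mul (hc _ _)
  have hScompact : IsCompact S := hSclosed.isCompact
  have himg : FbarSet n =
      (fun (v : PairIdx n → Sph) (P : PairIdx n) =>
        Projectivization.mk ℂ (v P : Fin 2 → ℂ) (sphere_pt_ne (v P))) '' S := by
    ext x
    constructor
    · intro hx
      refine ⟨fun P => ⟨(‖(x P).rep‖⁻¹ : ℂ) • (x P).rep, ?_⟩, ?_, ?_⟩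
      · rw [hSph, mem_sphere_zero_iff_norm, norm_smul]
        simp [norm_ne_zero_iff.2 (x P).rep_nonzero,
          inv_mul_cancel₀ (norm_ne_zero_iff.2 ((x P).rep_nonzero) : ‖(x P).rep‖ ≠ 0)]
      · intro i j k h3 hij hjk hkn
        have h := hx i j k h3 hij hjk hkn
        unfold cubicRel at h
        simp only [Pi.smul_apply, smul_eq_mul]
        set P1 : PairIdx n := ⟨(i, j), h3, hij, le_trans (le_of_lt hjk) hkn⟩
        set P2 : PairIdx n := ⟨(i, k), h3, lt_trans hij hjk, hkn⟩
        set P3 : PairIdx n := ⟨(j, k), le_trans h3 (le_of_lt hij), hjk, hkn⟩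
        linear_combination ((‖(x P1).rep‖⁻¹ : ℂ) * (‖(x P2).rep‖⁻¹ : ℂ) *
          (‖(x P3).rep‖⁻¹ : ℂ)) * h
      · funext P
        have : ((‖(x P).rep‖⁻¹ : ℂ)) ≠ 0 := by
          simp [norm_ne_zero_iff.2 (x P).rep_nonzero]
        refine Eq.trans ?_ (x P).mk_rep
        exact (Projectivization.mk_eq_mk_iff' ℂ _ _ _ _).2 ⟨(‖(x P).rep‖⁻¹ : ℂ), rfl⟩
    · rintro ⟨v, hv, rfl⟩
      intro i j k h3 hij hjk hkn
      exact (cubicRel_mk _ _ _).mpr (hv i j k h3 hij hjk hkn)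
  rw [himg]
  refine hScompact.image ?_
  refine continuous_pi fun P => ?_
  have heq : (fun v : PairIdx n → Sph =>
      Projectivization.mk ℂ (v P : Fin 2 → ℂ) (sphere_pt_ne (v P))) =
      mkc ∘ (fun v : PairIdx n → Sph =>
        (⟨(v P : Fin 2 → ℂ), sphere_pt_ne (v P)⟩ : {w : Fin 2 → ℂ // w ≠ 0})) := rfl
  rw [heq]
  exact continuous_mkc.comp (((continuous_apply P).subtype_val).subtype_mk _)


/-! ### Combinatorial chart data -/

section Charts

variable (n : ℕ)

/-- first element index (in `Fin (n-2)`) of a pair -/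
def eA (P : PairIdx n) : Fin (n - 2) :=
  ⟨P.1.1 - 3, by obtain ⟨h1, h2, h3⟩ := P.2; omega⟩
/-- second element index of a pair -/
def eB (P : PairIdx n) : Fin (n - 2) :=
  ⟨P.1.2 - 3, by obtain ⟨h1, h2, h3⟩ := P.2; omega⟩

lemma eA_lt_eB (P : PairIdx n) : (eA n P).val < (eB n P).val := by
  obtain ⟨h1, h2, h3⟩ := P.2
  simp only [eA, eB]
  omega

/-- the pair determined by two element indices -/
def pairOf (a b : Fin (n - 2)) (h : a.val < b.val) : PairIdx n :=
  ⟨(a.val + 3, b.val + 3), by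
    refine ⟨by omega, by omega, ?_⟩
    have := b.isLt
    omega⟩

@[simp] lemma eA_pairOf (a b : Fin (n - 2)) (h : a.val < b.val) :
    eA n (pairOf n a b h) = a := by
  apply Fin.ext
  simp [eA, pairOf]

@[simp] lemma eB_pairOf (a b : Fin (n - 2)) (h : a.val < b.val) :
    eB n (pairOf n a b h) = b := by
  apply Fin.ext
  simp [eB, pairOf]

lemma pairOf_eA_eB (P : PairIdx n) : pairOf n (eA n P) (eB n P) (eA_lt_eB n P) = P := by
  obtain ⟨h1, h2, h3⟩ := P.2
  apply Subtype.ext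
  apply Prod.ext <;> simp [pairOf, eA, eB] <;> omega

/-! ### Monomials -/

/-- extension of coordinates by 1 -/
def uhat (u : Fin (n - 3) → ℂ) (k : ℕ) : ℂ := if h : k < n - 3 then u ⟨k, h⟩ else 1

/-- the monomial `∏_{a ≤ k < b} u_k` -/
def Mon (u : Fin (n - 3) → ℂ) (a b : ℕ) : ℂ := ∏ k ∈ Finset.Ico a b, uhat n u k

lemma Mon_mul (u : Fin (n - 3) → ℂ) {a b c : ℕ} (hab : a ≤ b) (hbc : b ≤ c) :
    Mon n u a b * Mon n u b c = Mon n u a c :=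
  Finset.prod_Ico_consecutive _ hab hbc

lemma Mon_single (u : Fin (n - 3) → ℂ) (k : Fin (n - 3)) :
    Mon n u k.val (k.val + 1) = u k := by
  rw [Mon, Nat.Ico_succ_singleton, Finset.prod_singleton, uhat, dif_pos k.isLt]

lemma contDiff_Mon (a b : ℕ) : ContDiff ℂ ⊤ (fun u : Fin (n - 3) → ℂ => Mon n u a b) := by
  unfold Mon
  induction (Finset.Ico a b) using Finset.cons_induction with
  | empty => simpa using contDiff_const
  | cons k s hk ih =>
      simp only [Finset.prod_cons]
      refine ContDiff.mul ?_ ih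
      unfold uhat
      by_cases h : k < n - 3
      · simp only [dif_pos h]
        exact contDiff_apply ℂ ℂ (⟨k, h⟩ : Fin (n - 3))
      · simp only [dif_neg h]
        exact contDiff_const

/-! ### The chart maps -/

/-- the oriented point with affine value `Mon u a b` resp. its inverse -/
def opt (u : Fin (n - 3) → ℂ) (a b : ℕ) : CP1 :=
  if a < b then ptF (Mon n u a b) else ptI (Mon n u b a)

/-- the candidate point of `F̄_n` associated to chart data -/
def phi (σ : Equiv.Perm (Fin (n - 2))) (u : Fin (n - 3) → ℂ) : PairIdx n → CP1 :=
  fun P => opt n u (σ (eA n P)).val (σ (eB n P)).val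

/-- the chart domain inside `(ℂP¹)^N` -/
def Dom (σ : Equiv.Perm (Fin (n - 2))) : Set (PairIdx n → CP1) :=
  {x | ∀ P : PairIdx n,
    if (σ (eA n P)).val < (σ (eB n P)).val then (x P).rep 1 ≠ 0 else (x P).rep 0 ≠ 0}

/-- oriented affine reading of the pair between the elements at positions `a < b` -/
def Tread (σ : Equiv.Perm (Fin (n - 2))) (x : PairIdx n → CP1) (a b : Fin (n - 2)) : ℂ :=
  if h : (σ.symm a).val < (σ.symm b).val then ratio01 (x (pairOf n (σ.symm a) (σ.symm b) h))
  else if h2 : (σ.symm b).val < (σ.symm a).val then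
    ratio10 (x (pairOf n (σ.symm b) (σ.symm a) h2))
  else 0

/-- the chart map from (an open part of) `F̄_n` to `ℂ^{n-3}` -/
def psi (σ : Equiv.Perm (Fin (n - 2))) (x : PairIdx n → CP1) : Fin (n - 3) → ℂ :=
  fun k => Tread n σ x ⟨k.val, by have := k.isLt; omega⟩ ⟨k.val + 1, by have := k.isLt; omega⟩

/-! ### φ lands in the variety and in the chart domain -/

lemma cubic_opt (u : Fin (n - 3) → ℂ) (pa pb pc : ℕ) (hab : pa ≠ pb) (hac : pa ≠ pc)
    (hbc : pb ≠ pc) : cubicRel (opt n u pa pb) (opt n u pa pc) (opt n u pb pc) := by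
  unfold opt
  by_cases h1 : pa < pb <;> by_cases h2 : pa < pc <;> by_cases h3 : pb < pc
  · rw [if_pos h1, if_pos h2, if_pos h3]
    obtain ⟨a, ha0, ha1, ha2⟩ := rep_ptF (Mon n u pa pb)
    obtain ⟨b, hb0, hb1, hb2⟩ := rep_ptF (Mon n u pa pc)
    obtain ⟨c, hc0, hc1, hc2⟩ := rep_ptF (Mon n u pb pc)
    unfold cubicRel
    rw [ha1, ha2, hb1, hb2, hc1, hc2]
    have hM := Mon_mul n u (le_of_lt h1) (le_of_lt h3)
    linear_combination (-(a * b * c)) * hM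
  · have h3' : pc < pb := by omega
    rw [if_pos h1, if_pos h2, if_neg h3]
    obtain ⟨a, ha0, ha1, ha2⟩ := rep_ptF (Mon n u pa pb)
    obtain ⟨b, hb0, hb1, hb2⟩ := rep_ptF (Mon n u pa pc)
    obtain ⟨c, hc0, hc1, hc2⟩ := rep_ptI (Mon n u pc pb)
    unfold cubicRel
    rw [ha1, ha2, hb1, hb2, hc1, hc2]
    have hM := Mon_mul n u (le_of_lt h2) (le_of_lt h3')
    linear_combination (a * b * c) * hM
  · omega
  · have h2' : pc < pa := by omega
    have h3' : pc < pb := by omega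
    rw [if_pos h1, if_neg h2, if_neg h3]
    obtain ⟨a, ha0, ha1, ha2⟩ := rep_ptF (Mon n u pa pb)
    obtain ⟨b, hb0, hb1, hb2⟩ := rep_ptI (Mon n u pc pa)
    obtain ⟨c, hc0, hc1, hc2⟩ := rep_ptI (Mon n u pc pb)
    unfold cubicRel
    rw [ha1, ha2, hb1, hb2, hc1, hc2]
    have hM := Mon_mul n u (le_of_lt h2') (le_of_lt h1)
    linear_combination (-(a * b * c)) * hM
  · have h1' : pb < pa := by omega
    rw [if_neg h1, if_pos h2, if_pos h3]
    obtain ⟨a, ha0, ha1, ha2⟩ := rep_ptI (Mon n u pb pa)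
    obtain ⟨b, hb0, hb1, hb2⟩ := rep_ptF (Mon n u pa pc)
    obtain ⟨c, hc0, hc1, hc2⟩ := rep_ptF (Mon n u pb pc)
    unfold cubicRel
    rw [ha1, ha2, hb1, hb2, hc1, hc2]
    have hM := Mon_mul n u (le_of_lt h1') (le_of_lt h2)
    linear_combination (a * b * c) * hM
  · omega
  · have h1' : pb < pa := by omega
    have h2' : pc < pa := by omega
    rw [if_neg h1, if_neg h2, if_pos h3]
    obtain ⟨a, ha0, ha1, ha2⟩ := rep_ptI (Mon n u pb pa)
    obtain ⟨b, hb0, hb1, hb2⟩ := rep_ptI (Mon n u pc pa)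
    obtain ⟨c, hc0, hc1, hc2⟩ := rep_ptF (Mon n u pb pc)
    unfold cubicRel
    rw [ha1, ha2, hb1, hb2, hc1, hc2]
    have hM := Mon_mul n u (le_of_lt h3) (le_of_lt h2')
    linear_combination (-(a * b * c)) * hM
  · have h1' : pb < pa := by omega
    have h2' : pc < pa := by omega
    have h3' : pc < pb := by omega
    rw [if_neg h1, if_neg h2, if_neg h3]
    obtain ⟨a, ha0, ha1, ha2⟩ := rep_ptI (Mon n u pb pa)
    obtain ⟨b, hb0, hb1, hb2⟩ := rep_ptI (Mon n u pc pa)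
    obtain ⟨c, hc0, hc1, hc2⟩ := rep_ptI (Mon n u pc pb)
    unfold cubicRel
    rw [ha1, ha2, hb1, hb2, hc1, hc2]
    have hM := Mon_mul n u (le_of_lt h3') (le_of_lt h1')
    linear_combination (a * b * c) * hM


lemma sigma_val_ne (σ : Equiv.Perm (Fin (n - 2))) {a b : Fin (n - 2)} (h : a ≠ b) :
    (σ a).val ≠ (σ b).val := fun hv => h (σ.injective (Fin.ext hv))

lemma symm_val_ne (σ : Equiv.Perm (Fin (n - 2))) {a b : Fin (n - 2)} (h : a ≠ b) :
    (σ.symm a).val ≠ (σ.symm b).val := fun hv => h (σ.symm.injective (Fin.ext hv))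

lemma phi_mem_Fbar (σ : Equiv.Perm (Fin (n - 2))) (u : Fin (n - 3) → ℂ) :
    phi n σ u ∈ FbarSet n := by
  intro i j k h3 hij hjk hkn
  apply cubic_opt
  · exact sigma_val_ne n σ (by simp only [eA, eB, ne_eq, Fin.mk.injEq]; omega)
  · exact sigma_val_ne n σ (by simp only [eA, eB, ne_eq, Fin.mk.injEq]; omega)
  · exact sigma_val_ne n σ (by simp only [eA, eB, ne_eq, Fin.mk.injEq]; omega)

lemma phi_mem_Dom (σ : Equiv.Perm (Fin (n - 2))) (u : Fin (n - 3) → ℂ) :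
    phi n σ u ∈ Dom n σ := by
  intro P
  by_cases h : (σ (eA n P)).val < (σ (eB n P)).val
  · rw [if_pos h]
    show (opt n u (σ (eA n P)).val (σ (eB n P)).val).rep 1 ≠ 0
    unfold opt
    rw [if_pos h]
    obtain ⟨a, ha0, _, ha2⟩ := rep_ptF (Mon n u (σ (eA n P)).val (σ (eB n P)).val)
    rw [ha2]; exact ha0
  · rw [if_neg h]
    show (opt n u (σ (eA n P)).val (σ (eB n P)).val).rep 0 ≠ 0
    unfold opt
    rw [if_neg h]
    obtain ⟨a, ha0, ha1, _⟩ := rep_ptI (Mon n u (σ (eB n P)).val (σ (eA n P)).val)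
    rw [ha1]; exact ha0

lemma dom_spec (σ : Equiv.Perm (Fin (n - 2))) {x : PairIdx n → CP1} (hx : x ∈ Dom n σ)
    {a b : Fin (n - 2)} (hab : a.val < b.val) (h : (σ.symm a).val < (σ.symm b).val) :
    (x (pairOf n (σ.symm a) (σ.symm b) h)).rep 1 ≠ 0 := by
  have hP := hx (pairOf n (σ.symm a) (σ.symm b) h)
  rw [eA_pairOf, eB_pairOf, Equiv.apply_symm_apply, Equiv.apply_symm_apply,
    if_pos hab] at hP
  exact hP

lemma dom_spec' (σ : Equiv.Perm (Fin (n - 2))) {x : PairIdx n → CP1} (hx : x ∈ Dom n σ)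
    {a b : Fin (n - 2)} (hab : a.val < b.val) (h : (σ.symm b).val < (σ.symm a).val) :
    (x (pairOf n (σ.symm b) (σ.symm a) h)).rep 0 ≠ 0 := by
  have hP := hx (pairOf n (σ.symm b) (σ.symm a) h)
  rw [eA_pairOf, eB_pairOf, Equiv.apply_symm_apply, Equiv.apply_symm_apply,
    if_neg (by omega)] at hP
  exact hP

lemma Tread_phi (σ τ : Equiv.Perm (Fin (n - 2))) (u : Fin (n - 3) → ℂ)
    (a b : Fin (n - 2)) (hab : a ≠ b) :
    Tread n τ (phi n σ u) a b =
      if (σ (τ.symm a)).val < (σ (τ.symm b)).val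
      then Mon n u (σ (τ.symm a)).val (σ (τ.symm b)).val
      else (Mon n u (σ (τ.symm b)).val (σ (τ.symm a)).val)⁻¹ := by
  have hpq : (σ (τ.symm a)).val ≠ (σ (τ.symm b)).val :=
    sigma_val_ne n σ (fun h => hab (τ.symm.injective h))
  unfold Tread
  by_cases h : (τ.symm a).val < (τ.symm b).val
  · rw [dif_pos h]
    unfold phi
    rw [eA_pairOf, eB_pairOf]
    unfold opt
    by_cases hpq' : (σ (τ.symm a)).val < (σ (τ.symm b)).val
    · rw [if_pos hpq', if_pos hpq', ratio01_ptF]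
    · rw [if_neg hpq', if_neg hpq', ratio01_ptI]
  · by_cases h2 : (τ.symm b).val < (τ.symm a).val
    · rw [dif_neg h, dif_pos h2]
      unfold phi
      rw [eA_pairOf, eB_pairOf]
      unfold opt
      by_cases hpq' : (σ (τ.symm b)).val < (σ (τ.symm a)).val
      · rw [if_pos hpq', if_neg (by omega), ratio10_ptF]
      · rw [if_neg hpq', if_pos (by omega), ratio10_ptI]
    · exact absurd (Fin.ext (by omega) : τ.symm a = τ.symm b)
        (fun h => hab (τ.symm.injective h))

lemma psi_phi (σ : Equiv.Perm (Fin (n - 2))) (u : Fin (n - 3) → ℂ) :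
    psi n σ (phi n σ u) = u := by
  funext k
  unfold psi
  rw [Tread_phi n σ σ u _ _ (by simp only [ne_eq, Fin.mk.injEq]; omega)]
  simp only [Equiv.apply_symm_apply]
  rw [if_pos (by exact Nat.lt_succ_self k.val)]
  exact Mon_single n u k

lemma Tread_cocycle (σ : Equiv.Perm (Fin (n - 2))) {x : PairIdx n → CP1}
    (hxF : x ∈ FbarSet n) (hxD : x ∈ Dom n σ) (a b c : Fin (n - 2))
    (hab : a.val < b.val) (hbc : b.val < c.val) :
    Tread n σ x a c = Tread n σ x a b * Tread n σ x b c := by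
  have hac : a.val < c.val := lt_trans hab hbc
  have hA := (σ.symm a).isLt
  have hB := (σ.symm b).isLt
  have hC := (σ.symm c).isLt
  by_cases h1 : (σ.symm a).val < (σ.symm b).val <;>
    by_cases h2 : (σ.symm b).val < (σ.symm c).val
  · -- A < B < C
    have h3 : (σ.symm a).val < (σ.symm c).val := by omega
    have hcub : cubicRel (x (pairOf n (σ.symm a) (σ.symm b) h1))
        (x (pairOf n (σ.symm a) (σ.symm c) h3))
        (x (pairOf n (σ.symm b) (σ.symm c) h2)) :=
      hxF ((σ.symm a).val + 3) ((σ.symm b).val + 3) ((σ.symm c).val + 3)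
        (by omega) (by omega) (by omega) (by omega)
    have e1 := dom_spec n σ hxD hab h1
    have e2 := dom_spec n σ hxD hbc h2
    have e3 := dom_spec n σ hxD hac h3
    unfold Tread
    rw [dif_pos h3, dif_pos h1, dif_pos h2]
    unfold cubicRel at hcub
    unfold ratio01
    field_simp
    linear_combination hcub
  · -- A < B, C < B
    by_cases h3 : (σ.symm a).val < (σ.symm c).val
    · -- A < C < B
      have h2' : (σ.symm c).val < (σ.symm b).val := by
        rcases Nat.lt_or_ge (σ.symm c).val (σ.symm b).val with h | h
        · exact h
        · exact absurd (Fin.ext (by omega) : σ.symm b = σ.symm c)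
            (fun hh => (by omega : ¬(b.val = c.val)) (congrArg Fin.val (σ.symm.injective hh)))
      have hcub : cubicRel (x (pairOf n (σ.symm a) (σ.symm c) h3))
          (x (pairOf n (σ.symm a) (σ.symm b) h1))
          (x (pairOf n (σ.symm c) (σ.symm b) h2')) :=
        hxF ((σ.symm a).val + 3) ((σ.symm c).val + 3) ((σ.symm b).val + 3)
          (by omega) (by omega) (by omega) (by omega)
      have e1 := dom_spec n σ hxD hab h1
      have e2 := dom_spec' n σ hxD hbc h2'
      have e3 := dom_spec n σ hxD hac h3
      unfold Tread
      rw [dif_pos h3, dif_pos h1, dif_neg h2, dif_pos h2']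
      unfold cubicRel at hcub
      unfold ratio01 ratio10
      field_simp
      linear_combination -hcub
    · -- C < A < B
      have h3' : (σ.symm c).val < (σ.symm a).val := by
        rcases Nat.lt_or_ge (σ.symm c).val (σ.symm a).val with h | h
        · exact h
        · exact absurd (Fin.ext (by omega) : σ.symm a = σ.symm c)
            (fun hh => (by omega : ¬(a.val = c.val)) (congrArg Fin.val (σ.symm.injective hh)))
      have h2' : (σ.symm c).val < (σ.symm b).val := by omega
      have hcub : cubicRel (x (pairOf n (σ.symm c) (σ.symm a) h3'))
          (x (pairOf n (σ.symm c) (σ.symm b) h2'))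
          (x (pairOf n (σ.symm a) (σ.symm b) h1)) :=
        hxF ((σ.symm c).val + 3) ((σ.symm a).val + 3) ((σ.symm b).val + 3)
          (by omega) (by omega) (by omega) (by omega)
      have e1 := dom_spec n σ hxD hab h1
      have e2 := dom_spec' n σ hxD hbc h2'
      have e3 := dom_spec' n σ hxD hac h3'
      unfold Tread
      rw [dif_neg h3, dif_pos h3', dif_pos h1, dif_neg h2, dif_pos h2']
      unfold cubicRel at hcub
      unfold ratio01 ratio10
      field_simp
      linear_combination hcub
  · -- B < A, B < C
    have h1' : (σ.symm b).val < (σ.symm a).val := by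
      rcases Nat.lt_or_ge (σ.symm b).val (σ.symm a).val with h | h
      · exact h
      · exact absurd (Fin.ext (by omega) : σ.symm a = σ.symm b)
          (fun hh => (by omega : ¬(a.val = b.val)) (congrArg Fin.val (σ.symm.injective hh)))
    by_cases h3 : (σ.symm a).val < (σ.symm c).val
    · -- B < A < C
      have hcub : cubicRel (x (pairOf n (σ.symm b) (σ.symm a) h1'))
          (x (pairOf n (σ.symm b) (σ.symm c) h2))
          (x (pairOf n (σ.symm a) (σ.symm c) h3)) :=
        hxF ((σ.symm b).val + 3) ((σ.symm a).val + 3) ((σ.symm c).val + 3)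
          (by omega) (by omega) (by omega) (by omega)
      have e1 := dom_spec' n σ hxD hab h1'
      have e2 := dom_spec n σ hxD hbc h2
      have e3 := dom_spec n σ hxD hac h3
      unfold Tread
      rw [dif_pos h3, dif_neg h1, dif_pos h1', dif_pos h2]
      unfold cubicRel at hcub
      unfold ratio01 ratio10
      field_simp
      linear_combination -hcub
    · -- B < C < A
      have h3' : (σ.symm c).val < (σ.symm a).val := by
        rcases Nat.lt_or_ge (σ.symm c).val (σ.symm a).val with h | h
        · exact h
        · exact absurd (Fin.ext (by omega) : σ.symm a = σ.symm c)
            (fun hh => (by omega : ¬(a.val = c.val)) (congrArg Fin.val (σ.symm.injective hh)))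
      have hcub : cubicRel (x (pairOf n (σ.symm b) (σ.symm c) h2))
          (x (pairOf n (σ.symm b) (σ.symm a) h1'))
          (x (pairOf n (σ.symm c) (σ.symm a) h3')) :=
        hxF ((σ.symm b).val + 3) ((σ.symm c).val + 3) ((σ.symm a).val + 3)
          (by omega) (by omega) (by omega) (by omega)
      have e1 := dom_spec' n σ hxD hab h1'
      have e2 := dom_spec n σ hxD hbc h2
      have e3 := dom_spec' n σ hxD hac h3'
      unfold Tread
      rw [dif_neg h3, dif_pos h3', dif_neg h1, dif_pos h1', dif_pos h2]
      unfold cubicRel at hcub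
      unfold ratio01 ratio10
      field_simp
      linear_combination hcub
  · -- B < A, C < B : C < B < A
    have h1' : (σ.symm b).val < (σ.symm a).val := by
      rcases Nat.lt_or_ge (σ.symm b).val (σ.symm a).val with h | h
      · exact h
      · exact absurd (Fin.ext (by omega) : σ.symm a = σ.symm b)
          (fun hh => (by omega : ¬(a.val = b.val)) (congrArg Fin.val (σ.symm.injective hh)))
    have h2' : (σ.symm c).val < (σ.symm b).val := by
      rcases Nat.lt_or_ge (σ.symm c).val (σ.symm b).val with h | h
      · exact h
      · exact absurd (Fin.ext (by omega) : σ.symm b = σ.symm c)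
          (fun hh => (by omega : ¬(b.val = c.val)) (congrArg Fin.val (σ.symm.injective hh)))
    have h3' : (σ.symm c).val < (σ.symm a).val := by omega
    have hcub : cubicRel (x (pairOf n (σ.symm c) (σ.symm b) h2'))
        (x (pairOf n (σ.symm c) (σ.symm a) h3'))
        (x (pairOf n (σ.symm b) (σ.symm a) h1')) :=
      hxF ((σ.symm c).val + 3) ((σ.symm b).val + 3) ((σ.symm a).val + 3)
        (by omega) (by omega) (by omega) (by omega)
    have e1 := dom_spec' n σ hxD hab h1'
    have e2 := dom_spec' n σ hxD hbc h2'
    have e3 := dom_spec' n σ hxD hac h3'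
    unfold Tread
    rw [dif_neg (by omega), dif_pos h3', dif_neg h1, dif_pos h1', dif_neg h2, dif_pos h2']
    unfold cubicRel at hcub
    unfold ratio10
    field_simp
    linear_combination -hcub


lemma Tread_edge (σ : Equiv.Perm (Fin (n - 2))) (x : PairIdx n → CP1) (a b : Fin (n - 2))
    (hb : b.val = a.val + 1) :
    Tread n σ x a b = Mon n (psi n σ x) a.val b.val := by
  have hk : a.val < n - 3 := by have := b.isLt; omega
  have h : Tread n σ x a b = psi n σ x ⟨a.val, hk⟩ := by
    unfold psi
    congr 1 <;> exact Fin.ext (by simp; omega)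
  rw [h, hb]
  exact (Mon_single n (psi n σ x) ⟨a.val, hk⟩).symm

lemma Tread_Mon (σ : Equiv.Perm (Fin (n - 2))) {x : PairIdx n → CP1}
    (hxF : x ∈ FbarSet n) (hxD : x ∈ Dom n σ) :
    ∀ (d : ℕ) (a b : Fin (n - 2)), b.val = a.val + (d + 1) →
      Tread n σ x a b = Mon n (psi n σ x) a.val b.val := by
  intro d
  induction d with
  | zero =>
      intro a b hb
      exact Tread_edge n σ x a b (by omega)
  | succ d ih =>
      intro a b hb
      have hblt := b.isLt
      set m : Fin (n - 2) := ⟨a.val + 1, by omega⟩ with hm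
      have hmv : m.val = a.val + 1 := rfl
      have h1 : a.val < m.val := by omega
      have h2 : m.val < b.val := by omega
      rw [Tread_cocycle n σ hxF hxD a m b h1 h2]
      rw [Tread_edge n σ x a m hmv]
      rw [ih m b (by omega)]
      exact Mon_mul n _ (le_of_lt h1) (le_of_lt h2)

lemma Tread_Mon' (σ : Equiv.Perm (Fin (n - 2))) {x : PairIdx n → CP1}
    (hxF : x ∈ FbarSet n) (hxD : x ∈ Dom n σ) (a b : Fin (n - 2)) (h : a.val < b.val) :
    Tread n σ x a b = Mon n (psi n σ x) a.val b.val :=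
  Tread_Mon n σ hxF hxD (b.val - a.val - 1) a b (by omega)

lemma phi_psi (σ : Equiv.Perm (Fin (n - 2))) {x : PairIdx n → CP1}
    (hxF : x ∈ FbarSet n) (hxD : x ∈ Dom n σ) :
    phi n σ (psi n σ x) = x := by
  funext P
  have hAB := eA_lt_eB n P
  unfold phi opt
  by_cases h : (σ (eA n P)).val < (σ (eB n P)).val
  · rw [if_pos h]
    rw [← Tread_Mon' n σ hxF hxD (σ (eA n P)) (σ (eB n P)) h]
    unfold Tread
    simp only [Equiv.symm_apply_apply]
    rw [dif_pos hAB, pairOf_eA_eB]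
    have hd := hxD P
    rw [if_pos h] at hd
    exact ptF_ratio (x P) hd
  · rw [if_neg h]
    have h' : (σ (eB n P)).val < (σ (eA n P)).val := by
      have : (σ (eA n P)).val ≠ (σ (eB n P)).val :=
        sigma_val_ne n σ (fun hh => by
          have := congrArg Fin.val hh
          omega)
      omega
    rw [← Tread_Mon' n σ hxF hxD (σ (eB n P)) (σ (eA n P)) h']
    unfold Tread
    simp only [Equiv.symm_apply_apply]
    rw [dif_neg (by omega), dif_pos hAB, pairOf_eA_eB]
    have hd := hxD P
    rw [if_neg h] at hd
    exact ptI_ratio (x P) hd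


/-! ### Topological properties of the charts -/

lemma isOpen_Dom (σ : Equiv.Perm (Fin (n - 2))) : IsOpen (Dom n σ) := by
  have hrw : Dom n σ = ⋂ P : PairIdx n, (fun x : PairIdx n → CP1 => x P) ⁻¹'
      (if (σ (eA n P)).val < (σ (eB n P)).val then {p : CP1 | p.rep 1 ≠ 0}
        else {p : CP1 | p.rep 0 ≠ 0}) := by
    ext x
    simp only [Dom, Set.mem_setOf_eq, Set.mem_iInter, Set.mem_preimage]
    refine forall_congr' fun P => ?_
    by_cases h : (σ (eA n P)).val < (σ (eB n P)).val <;> simp [h]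
  rw [hrw]
  refine isOpen_iInter_of_finite fun P => ?_
  by_cases h : (σ (eA n P)).val < (σ (eB n P)).val
  · rw [if_pos h]; exact isOpen_rep1_ne.preimage (continuous_apply P)
  · rw [if_neg h]; exact isOpen_rep0_ne.preimage (continuous_apply P)

lemma continuous_ptF : Continuous ptF := by
  have h : ptF = mkc ∘ (fun t => (⟨vF t, vF_ne t⟩ : {v : Fin 2 → ℂ // v ≠ 0})) := rfl
  rw [h]
  refine continuous_mkc.comp (Continuous.subtype_mk ?_ _)
  refine continuous_pi fun i => ?_
  unfold vF
  by_cases hi : i = 0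
  · simpa [hi] using continuous_id'
  · simpa [hi] using continuous_const

lemma continuous_ptI : Continuous ptI := by
  have h : ptI = mkc ∘ (fun t => (⟨vI t, vI_ne t⟩ : {v : Fin 2 → ℂ // v ≠ 0})) := rfl
  rw [h]
  refine continuous_mkc.comp (Continuous.subtype_mk ?_ _)
  refine continuous_pi fun i => ?_
  unfold vI
  by_cases hi : i = 0
  · simpa [hi] using continuous_const
  · simpa [hi] using continuous_id'

lemma continuous_phi (σ : Equiv.Perm (Fin (n - 2))) :
    Continuous (fun u : Fin (n - 3) → ℂ => phi n σ u) := by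
  refine continuous_pi fun P => ?_
  unfold phi opt
  by_cases h : (σ (eA n P)).val < (σ (eB n P)).val
  · simp only [if_pos h]
    exact continuous_ptF.comp (contDiff_Mon n _ _).continuous
  · simp only [if_neg h]
    exact continuous_ptI.comp (contDiff_Mon n _ _).continuous

lemma continuousOn_psi (σ : Equiv.Perm (Fin (n - 2))) :
    ContinuousOn (psi n σ) (Dom n σ) := by
  refine continuousOn_pi.2 fun k => ?_
  unfold psi Tread
  by_cases h : (σ.symm ⟨k.val, by have := k.isLt; omega⟩).val <
      (σ.symm ⟨k.val + 1, by have := k.isLt; omega⟩).val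
  · simp only [dif_pos h]
    refine continuousOn_ratio01.comp (continuous_apply _).continuousOn ?_
    intro x hx
    exact dom_spec n σ hx (by exact Nat.lt_succ_self k.val) h
  · by_cases h2 : (σ.symm ⟨k.val + 1, by have := k.isLt; omega⟩).val <
        (σ.symm ⟨k.val, by have := k.isLt; omega⟩).val
    · simp only [dif_neg h, dif_pos h2]
      refine continuousOn_ratio10.comp (continuous_apply _).continuousOn ?_
      intro x hx
      exact dom_spec' n σ hx (by exact Nat.lt_succ_self k.val) h2
    · simp only [dif_neg h, dif_neg h2]
      exact continuousOn_const

/-! ### Nonvanishing of monomials on overlaps -/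

lemma Mon_ne_of_Dom (σ τ : Equiv.Perm (Fin (n - 2))) (u : Fin (n - 3) → ℂ)
    (hu : phi n σ u ∈ Dom n τ) (a b : Fin (n - 2)) (hab : a.val < b.val)
    (hpq : ¬ (σ (τ.symm a)).val < (σ (τ.symm b)).val) :
    Mon n u (σ (τ.symm b)).val (σ (τ.symm a)).val ≠ 0 := by
  have hne : τ.symm a ≠ τ.symm b := fun h => by
    have := congrArg Fin.val (τ.symm.injective h)
    omega
  have hq : (σ (τ.symm b)).val < (σ (τ.symm a)).val := by
    have := sigma_val_ne n σ hne
    omega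
  by_cases h : (τ.symm a).val < (τ.symm b).val
  · have hP := hu (pairOf n (τ.symm a) (τ.symm b) h)
    rw [eA_pairOf, eB_pairOf, Equiv.apply_symm_apply, Equiv.apply_symm_apply,
      if_pos hab] at hP
    have hphi : phi n σ u (pairOf n (τ.symm a) (τ.symm b) h) =
        ptI (Mon n u (σ (τ.symm b)).val (σ (τ.symm a)).val) := by
      unfold phi opt
      rw [eA_pairOf, eB_pairOf, if_neg hpq]
    rw [hphi] at hP
    obtain ⟨c, hc0, hc1, hc2⟩ := rep_ptI (Mon n u (σ (τ.symm b)).val (σ (τ.symm a)).val)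
    rw [hc2] at hP
    exact fun hM => hP (by rw [hM, mul_zero])
  · have h' : (τ.symm b).val < (τ.symm a).val := by
      have : (τ.symm a).val ≠ (τ.symm b).val := fun hv => hne (Fin.ext hv)
      omega
    have hP := hu (pairOf n (τ.symm b) (τ.symm a) h')
    rw [eA_pairOf, eB_pairOf, Equiv.apply_symm_apply, Equiv.apply_symm_apply,
      if_neg (by omega)] at hP
    have hphi : phi n σ u (pairOf n (τ.symm b) (τ.symm a) h') =
        ptF (Mon n u (σ (τ.symm b)).val (σ (τ.symm a)).val) := by
      unfold phi opt
      rw [eA_pairOf, eB_pairOf, if_pos hq]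
    rw [hphi] at hP
    obtain ⟨c, hc0, hc1, hc2⟩ := rep_ptF (Mon n u (σ (τ.symm b)).val (σ (τ.symm a)).val)
    rw [hc1] at hP
    exact fun hM => hP (by rw [hM, mul_zero])

/-! ### Every point of the variety lies in some chart domain -/

lemma exists_sigma {x : PairIdx n → CP1} (hxF : x ∈ FbarSet n) :
    ∃ σ : Equiv.Perm (Fin (n - 2)), x ∈ Dom n σ := by
  classical
  set R : Fin (n - 2) → Fin (n - 2) → Prop := fun a b =>
    (∃ h : a.val < b.val, (x (pairOf n a b h)).rep 0 = 0) ∨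
    (∃ h : b.val < a.val, (x (pairOf n b a h)).rep 1 = 0) with hR
  have hcub : ∀ (a b c : Fin (n - 2)) (h1 : a.val < b.val) (h2 : b.val < c.val),
      cubicRel (x (pairOf n a b h1)) (x (pairOf n a c (lt_trans h1 h2)))
        (x (pairOf n b c h2)) := by
    intro a b c h1 h2
    have hc := c.isLt
    exact hxF (a.val + 3) (b.val + 3) (c.val + 3) (by omega) (by omega) (by omega) (by omega)
  have extract0 : ∀ {p q r : ℂ}, p * q * r = 0 → q ≠ 0 → r ≠ 0 → p = 0 := by
    intro p q r h hq hr
    rcases mul_eq_zero.1 h with h' | h'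
    · rcases mul_eq_zero.1 h' with h'' | h''
      · exact h''
      · exact absurd h'' hq
    · exact absurd h' hr
  have extract1 : ∀ {p q r : ℂ}, p * q * r = 0 → p ≠ 0 → r ≠ 0 → q = 0 := by
    intro p q r h hp hr
    rcases mul_eq_zero.1 h with h' | h'
    · rcases mul_eq_zero.1 h' with h'' | h''
      · exact absurd h'' hp
      · exact h''
    · exact absurd h' hr
  have extract2 : ∀ {p q r : ℂ}, p * q * r = 0 → p ≠ 0 → q ≠ 0 → r = 0 := by
    intro p q r h hp hq
    rcases mul_eq_zero.1 h with h' | h'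
    · rcases mul_eq_zero.1 h' with h'' | h''
      · exact absurd h'' hp
      · exact absurd h'' hq
    · exact h'
  have hnz : ∀ {a b : Fin (n - 2)} (h : a.val < b.val),
      ¬((x (pairOf n a b h)).rep 0 = 0 ∧ (x (pairOf n a b h)).rep 1 = 0) := by
    intro a b h hcontra
    rcases rep_ne_or (x (pairOf n a b h)) with h0 | h1
    · exact h0 hcontra.1
    · exact h1 hcontra.2
  have Rasym : ∀ {a b}, R a b → R b a → False := by
    intro a b hab hba
    rcases hab with ⟨h, h0⟩ | ⟨h, h1⟩ <;> rcases hba with ⟨h', h0'⟩ | ⟨h', h1'⟩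
    · omega
    · exact hnz h ⟨h0, h1'⟩
    · exact hnz h' ⟨h0', h1⟩
    · omega
  have Rtrans : ∀ {a b c}, R a b → R b c → R a c := by
    intro a b c hab hbc
    rcases hab with ⟨h1, e1⟩ | ⟨h1, e1⟩ <;> rcases hbc with ⟨h2, e2⟩ | ⟨h2, e2⟩
    · -- a<b, rep0(ab)=0 ; b<c, rep0(bc)=0
      have hq := hcub a b c h1 h2
      unfold cubicRel at hq
      have n1 : (x (pairOf n a b h1)).rep 1 ≠ 0 := fun hh => hnz h1 ⟨e1, hh⟩
      have n2 : (x (pairOf n b c h2)).rep 1 ≠ 0 := fun hh => hnz h2 ⟨e2, hh⟩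
      rw [e1, zero_mul, zero_mul] at hq
      exact Or.inl ⟨lt_trans h1 h2, extract1 hq n1 n2⟩
    · -- a<b, rep0(ab)=0 ; c<b, rep1(cb)=0
      rcases Nat.lt_trichotomy a.val c.val with h3 | h3 | h3
      · -- a<c<b : cubic a c b
        have hq := hcub a c b h3 h2
        unfold cubicRel at hq
        have n1 : (x (pairOf n a b (lt_trans h3 h2))).rep 1 ≠ 0 := fun hh =>
          hnz h1 ⟨e1, hh⟩
        have n2 : (x (pairOf n c b h2)).rep 0 ≠ 0 := fun hh => hnz h2 ⟨hh, e2⟩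
        have hz : (x (pairOf n a b (lt_trans h3 h2))).rep 0 = 0 := e1
        rw [hz, mul_zero, zero_mul] at hq
        exact Or.inl ⟨h3, extract0 hq.symm n1 n2⟩
      · have hac : a = c := Fin.ext h3
        subst hac
        exact absurd (Or.inr ⟨h2, e2⟩ : R b a) (fun hh => Rasym (Or.inl ⟨h1, e1⟩) hh)
      · -- c<a<b : cubic c a b
        have hq := hcub c a b h3 h1
        unfold cubicRel at hq
        have n1 : (x (pairOf n c b (lt_trans h3 h1))).rep 0 ≠ 0 := fun hh =>
          hnz (lt_trans h3 h1) ⟨hh, e2⟩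
        have n2 : (x (pairOf n a b h1)).rep 1 ≠ 0 := fun hh => hnz h1 ⟨e1, hh⟩
        have hz : (x (pairOf n c b (lt_trans h3 h1))).rep 1 = 0 := e2
        rw [hz, mul_zero, zero_mul] at hq
        exact Or.inr ⟨h3, extract0 hq n1 n2⟩
    · -- b<a, rep1(ba)=0 ; b<c, rep0(bc)=0
      rcases Nat.lt_trichotomy a.val c.val with h3 | h3 | h3
      · -- b<a<c : cubic b a c
        have hq := hcub b a c h1 h3
        unfold cubicRel at hq
        have n1 : (x (pairOf n b a h1)).rep 0 ≠ 0 := fun hh => hnz h1 ⟨hh, e1⟩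
        have n2 : (x (pairOf n b c (lt_trans h1 h3))).rep 1 ≠ 0 := fun hh =>
          hnz h2 ⟨e2, hh⟩
        rw [e1, zero_mul, zero_mul] at hq
        exact Or.inl ⟨h3, extract2 hq.symm n1 n2⟩
      · have hac : a = c := Fin.ext h3
        subst hac
        exact absurd (Or.inl ⟨h2, e2⟩ : R b a) (fun hh => Rasym (Or.inr ⟨h1, e1⟩) hh)
      · -- b<c<a : cubic b c a
        have hq := hcub b c a h2 h3
        unfold cubicRel at hq
        have n1 : (x (pairOf n b c h2)).rep 1 ≠ 0 := fun hh => hnz h2 ⟨e2, hh⟩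
        have n2 : (x (pairOf n b a (lt_trans h2 h3))).rep 0 ≠ 0 := fun hh =>
          hnz h1 ⟨hh, e1⟩
        rw [e2, zero_mul, zero_mul] at hq
        exact Or.inr ⟨h3, extract2 hq n1 n2⟩
    · -- b<a, rep1(ba)=0 ; c<b, rep1(cb)=0 : c<b<a
      have hq := hcub c b a h2 h1
      unfold cubicRel at hq
      have n1 : (x (pairOf n c b h2)).rep 0 ≠ 0 := fun hh => hnz h2 ⟨hh, e2⟩
      have n2 : (x (pairOf n b a h1)).rep 0 ≠ 0 := fun hh => hnz h1 ⟨hh, e1⟩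
      rw [e2, zero_mul, zero_mul] at hq
      exact Or.inr ⟨lt_trans h2 h1, extract1 hq.symm n1 n2⟩
  -- extend to a linear order and rank
  let r : Fin (n - 2) → Fin (n - 2) → Prop := fun a b => a = b ∨ R a b
  haveI : IsRefl (Fin (n - 2)) r := ⟨fun a => Or.inl rfl⟩
  haveI : IsTrans (Fin (n - 2)) r := ⟨by
    rintro a b c (rfl | hab) hbc
    · exact hbc
    · rcases hbc with rfl | hbc
      · exact Or.inr hab
      · exact Or.inr (Rtrans hab hbc)⟩
  haveI : IsAntisymm (Fin (n - 2)) r := ⟨by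
    rintro a b (rfl | hab) hba
    · rfl
    · rcases hba with rfl | hba
      · rfl
      · exact absurd hba (fun h => Rasym hab h)⟩
  haveI hpo : IsPartialOrder (Fin (n - 2)) r := { }
  obtain ⟨s, hlin, hrs⟩ := extend_partialOrder r
  have stot : ∀ a b, s a b ∨ s b a := hlin.toTotal.total
  have strans : ∀ {a b c}, s a b → s b c → s a c := fun h h' =>
    hlin.toIsPartialOrder.toIsPreorder.toIsTrans.trans _ _ _ h h'
  have santi : ∀ {a b}, s a b → s b a → a = b := fun h h' =>
    hlin.toIsPartialOrder.toAntisymm.antisymm _ _ h h'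
  let pos : Fin (n - 2) → ℕ := fun a => (Finset.univ.filter (fun b => s b a ∧ b ≠ a)).card
  have hposlt : ∀ a, pos a < n - 2 := by
    intro a
    have hsub : Finset.univ.filter (fun b => s b a ∧ b ≠ a) ⊆ Finset.univ.erase a := by
      intro c hc
      simp only [Finset.mem_filter] at hc
      exact Finset.mem_erase.2 ⟨hc.2.2, Finset.mem_univ c⟩
    calc pos a ≤ (Finset.univ.erase a).card := Finset.card_le_card hsub
      _ < Finset.univ.card := Finset.card_erase_lt_of_mem (Finset.mem_univ a)
      _ = n - 2 := by simp
  have hmono : ∀ a b, s a b → a ≠ b → pos a < pos b := by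
    intro a b hs hne
    have hsub : Finset.univ.filter (fun c => s c a ∧ c ≠ a) ⊆
        Finset.univ.filter (fun c => s c b ∧ c ≠ b) := by
      intro c hc
      simp only [Finset.mem_filter] at hc ⊢
      refine ⟨Finset.mem_univ c, strans hc.2.1 hs, fun hcb => ?_⟩
      exact hne (santi hs (hcb ▸ hc.2.1))
    have hmem : a ∈ Finset.univ.filter (fun c => s c b ∧ c ≠ b) := by
      simp only [Finset.mem_filter]
      exact ⟨Finset.mem_univ a, hs, hne⟩
    have hnotmem : a ∉ Finset.univ.filter (fun c => s c a ∧ c ≠ a) := by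
      simp only [Finset.mem_filter]
      rintro ⟨-, -, haa⟩
      exact haa rfl
    exact Finset.card_lt_card ((Finset.ssubset_iff_of_subset hsub).2 ⟨a, hmem, hnotmem⟩)
  have hinj : Function.Injective (fun a => (⟨pos a, hposlt a⟩ : Fin (n - 2))) := by
    intro a b h
    by_contra hne
    simp only [Fin.mk.injEq] at h
    rcases stot a b with hs | hs
    · have := hmono a b hs hne
      omega
    · have := hmono b a hs (Ne.symm hne)
      omega
  let σ : Equiv.Perm (Fin (n - 2)) :=
    Equiv.ofBijective _ (Finite.injective_iff_bijective.1 hinj)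
  have hσval : ∀ a, (σ a).val = pos a := fun a => rfl
  refine ⟨σ, ?_⟩
  intro P
  have hAB := eA_lt_eB n P
  have hABne : eA n P ≠ eB n P := fun hh => by
    have := congrArg Fin.val hh
    omega
  by_cases h : (σ (eA n P)).val < (σ (eB n P)).val
  · rw [if_pos h]
    intro hrep
    have hRba : R (eB n P) (eA n P) := Or.inr ⟨hAB, by rw [pairOf_eA_eB]; exact hrep⟩
    have hsba : s (eB n P) (eA n P) := hrs _ _ (Or.inr hRba)
    have := hmono _ _ hsba (Ne.symm hABne)
    rw [hσval, hσval] at h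
    omega
  · rw [if_neg h]
    intro hrep
    have hRab : R (eA n P) (eB n P) := Or.inl ⟨hAB, by rw [pairOf_eA_eB]; exact hrep⟩
    have hsab : s (eA n P) (eB n P) := hrs _ _ (Or.inr hRab)
    have := hmono _ _ hsab hABne
    rw [hσval, hσval] at h
    omega


/-! ### The charts as partial homeomorphisms -/

/-- identification of `EuclideanSpace ℂ (Fin (n-3))` with plain functions -/
def LL : EuclideanSpace ℂ (Fin (n - 3)) ≃L[ℂ] (Fin (n - 3) → ℂ) :=
  PiLp.continuousLinearEquiv 2 ℂ (fun _ : Fin (n - 3) => ℂ)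

/-- the chart of `F̄_n` associated with an ordering `σ` -/
def chartE (σ : Equiv.Perm (Fin (n - 2))) :
    OpenPartialHomeomorph (↥(FbarSet n)) (EuclideanSpace ℂ (Fin (n - 3))) where
  toFun := fun x => (LL n).symm (psi n σ x.val)
  invFun := fun u => ⟨phi n σ (LL n u), phi_mem_Fbar n σ _⟩
  source := Subtype.val ⁻¹' (Dom n σ)
  target := Set.univ
  map_source' := fun _ _ => trivial
  map_target' := fun u _ => phi_mem_Dom n σ _
  left_inv' := fun x hx => by
    apply Subtype.ext
    show phi n σ (LL n ((LL n).symm (psi n σ x.val))) = x.val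
    rw [ContinuousLinearEquiv.apply_symm_apply]
    exact phi_psi n σ x.2 hx
  right_inv' := fun u _ => by
    show (LL n).symm (psi n σ (phi n σ (LL n u))) = u
    rw [psi_phi n σ (LL n u), ContinuousLinearEquiv.symm_apply_apply]
  open_source := (isOpen_Dom n σ).preimage continuous_subtype_val
  open_target := isOpen_univ
  continuousOn_toFun := by
    refine (LL n).symm.continuous.comp_continuousOn ?_
    exact (continuousOn_psi n σ).comp continuous_subtype_val.continuousOn
      (fun x hx => hx)
  continuousOn_invFun := by
    refine Continuous.continuousOn ?_
    exact (((continuous_phi n σ).comp (LL n).continuous).subtype_mk _)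

lemma chartE_coe (σ : Equiv.Perm (Fin (n - 2))) :
    ⇑(chartE n σ) = fun x : ↥(FbarSet n) => (LL n).symm (psi n σ x.val) := rfl

lemma chartE_symm_coe (σ : Equiv.Perm (Fin (n - 2))) :
    ⇑(chartE n σ).symm =
      fun u => (⟨phi n σ (LL n u), phi_mem_Fbar n σ _⟩ : ↥(FbarSet n)) := rfl

lemma chartE_source (σ : Equiv.Perm (Fin (n - 2))) :
    (chartE n σ).source = Subtype.val ⁻¹' (Dom n σ) := rfl

/-- a choice of chart through every point -/
def chooseSigma (x : ↥(FbarSet n)) : Equiv.Perm (Fin (n - 2)) :=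
  Classical.choose (exists_sigma n x.2)

lemma chooseSigma_spec (x : ↥(FbarSet n)) : x.val ∈ Dom n (chooseSigma n x) :=
  Classical.choose_spec (exists_sigma n x.2)

/-- the charted space structure on `F̄_n` -/
def csF : ChartedSpace (EuclideanSpace ℂ (Fin (n - 3))) ↥(FbarSet n) where
  atlas := Set.range (chartE n)
  chartAt := fun x => chartE n (chooseSigma n x)
  mem_chart_source := fun x => chooseSigma_spec n x
  chart_mem_atlas := fun _ => Set.mem_range_self _

/-! ### Smoothness of transition maps -/

lemma contDiffOn_transition (σ τ : Equiv.Perm (Fin (n - 2))) :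
    ContDiffOn ℂ ⊤ (fun u : EuclideanSpace ℂ (Fin (n - 3)) =>
        (LL n).symm (psi n τ (phi n σ (LL n u))))
      {u : EuclideanSpace ℂ (Fin (n - 3)) | phi n σ (LL n u) ∈ Dom n τ} := by
  refine ((LL n).symm.comp_contDiffOn_iff).2 ?_
  refine contDiffOn_pi.2 fun k => ?_
  simp only [psi]
  have hk := k.isLt
  have hne : (⟨k.val, by omega⟩ : Fin (n - 2)) ≠ ⟨k.val + 1, by omega⟩ := by
    simp only [ne_eq, Fin.mk.injEq]
    omega
  set a : Fin (n - 2) := ⟨k.val, by omega⟩ with ha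
  set b : Fin (n - 2) := ⟨k.val + 1, by omega⟩ with hb
  by_cases hpq : (σ (τ.symm a)).val < (σ (τ.symm b)).val
  · refine ContDiffOn.congr
      (((contDiff_Mon n (σ (τ.symm a)).val (σ (τ.symm b)).val).comp
        (LL n).contDiff).contDiffOn) ?_
    intro u hu
    have h := Tread_phi n σ τ (LL n u) a b hne
    rw [if_pos hpq] at h
    exact h
  · refine ContDiffOn.congr (ContDiffOn.inv
      (((contDiff_Mon n (σ (τ.symm b)).val (σ (τ.symm a)).val).comp
        (LL n).contDiff).contDiffOn) ?_) ?_
    · intro u hu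
      exact Mon_ne_of_Dom n σ τ (LL n u) hu a b (Nat.lt_succ_self k.val) hpq
    · intro u hu
      have h := Tread_phi n σ τ (LL n u) a b hne
      rw [if_neg hpq] at h
      exact h

lemma smooth_csF :
    @IsManifold ℂ _ (EuclideanSpace ℂ (Fin (n - 3))) _ _
      (EuclideanSpace ℂ (Fin (n - 3))) _
      (modelWithCornersSelf ℂ (EuclideanSpace ℂ (Fin (n - 3)))) (⊤ : ℕ∞) ↥(FbarSet n) _ (csF n) := by
  letI := csF n
  apply isManifold_of_contDiffOn
  intro e e' he he'
  obtain ⟨σ, rfl⟩ := he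
  obtain ⟨τ, rfl⟩ := he'
  simp only [modelWithCornersSelf_coe, modelWithCornersSelf_coe_symm, Function.comp_id,
    Function.id_comp, Set.range_id, Set.inter_univ, Set.preimage_id, CompTriple.comp_eq]
  have hsrc : ((chartE n σ).symm.trans (chartE n τ)).source =
      {u : EuclideanSpace ℂ (Fin (n - 3)) | phi n σ (LL n u) ∈ Dom n τ} := by
    rw [OpenPartialHomeomorph.trans_source, OpenPartialHomeomorph.symm_source]
    show Set.univ ∩ ⇑(chartE n σ).symm ⁻¹' (Subtype.val ⁻¹' (Dom n τ)) = _
    rw [Set.univ_inter]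
    rfl
  have hco : ⇑((chartE n σ).symm.trans (chartE n τ)) =
      fun u => (LL n).symm (psi n τ (phi n σ (LL n u))) := rfl
  rw [hco, hsrc]
  exact (contDiffOn_transition n σ τ).of_le le_top


/-! ### Holomorphy of the coordinate readings -/

lemma ratio10_phi (σ : Equiv.Perm (Fin (n - 2))) (u : Fin (n - 3) → ℂ) (P : PairIdx n) :
    ratio10 (phi n σ u P) =
      if (σ (eA n P)).val < (σ (eB n P)).val
      then (Mon n u (σ (eA n P)).val (σ (eB n P)).val)⁻¹
      else Mon n u (σ (eB n P)).val (σ (eA n P)).val := by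
  unfold phi opt
  by_cases h : (σ (eA n P)).val < (σ (eB n P)).val
  · rw [if_pos h, if_pos h, ratio10_ptF]
  · rw [if_neg h, if_neg h, ratio10_ptI]

lemma ratio01_phi (σ : Equiv.Perm (Fin (n - 2))) (u : Fin (n - 3) → ℂ) (P : PairIdx n) :
    ratio01 (phi n σ u P) =
      if (σ (eA n P)).val < (σ (eB n P)).val
      then Mon n u (σ (eA n P)).val (σ (eB n P)).val
      else (Mon n u (σ (eB n P)).val (σ (eA n P)).val)⁻¹ := by
  unfold phi opt
  by_cases h : (σ (eA n P)).val < (σ (eB n P)).val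
  · rw [if_pos h, if_pos h, ratio01_ptF]
  · rw [if_neg h, if_neg h, ratio01_ptI]

lemma mdiff10 (P : PairIdx n) :
    (by letI := csF n
        exact MDifferentiableOn (modelWithCornersSelf ℂ (EuclideanSpace ℂ (Fin (n - 3))))
          (modelWithCornersSelf ℂ ℂ)
          (fun x : ↥(FbarSet n) => ((x.val P).rep 1) / ((x.val P).rep 0))
          {x : ↥(FbarSet n) | (x.val P).rep 0 ≠ 0} : Prop) := by
  letI := csF n
  intro x hx
  rw [mdifferentiableWithinAt_iff]
  constructor
  · refine ContinuousOn.continuousWithinAt ?_ hx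
    exact ContinuousOn.comp (g := ratio10)
      (f := fun y : ↥(FbarSet n) => y.val P)
      (t := {p : CP1 | p.rep 0 ≠ 0})
      continuousOn_ratio10
      (((continuous_apply P).comp continuous_subtype_val).continuousOn)
      (fun y hy => hy)
  · simp only [extChartAt_model_space_eq_id, PartialEquiv.refl_coe, extChartAt_coe,
      extChartAt_coe_symm, modelWithCornersSelf_coe, modelWithCornersSelf_coe_symm,
      Set.range_id, Set.inter_univ, Function.comp_id, Function.id_comp,
      CompTriple.comp_eq, Set.preimage_id]
    set σ := chooseSigma n x with hσ
    have hdom : x.val ∈ Dom n σ := chooseSigma_spec n x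
    have hchart : chartAt (EuclideanSpace ℂ (Fin (n - 3))) x = chartE n σ := rfl
    rw [hchart]
    have hfun : ((fun x : ↥(FbarSet n) => ((x.val P).rep 1) / ((x.val P).rep 0)) ∘
        ⇑(chartE n σ).symm) =
        fun u => ratio10 (phi n σ (LL n u) P) := rfl
    by_cases h : (σ (eA n P)).val < (σ (eB n P)).val
    · -- value is an inverse of a monomial, nonvanishing at the point
      have hfun2 : ((fun x : ↥(FbarSet n) => ((x.val P).rep 1) / ((x.val P).rep 0)) ∘
          ⇑(chartE n σ).symm) =
          fun u => (Mon n (LL n u) (σ (eA n P)).val (σ (eB n P)).val)⁻¹ := by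
        rw [hfun]
        funext u
        rw [ratio10_phi, if_pos h]
      rw [hfun2]
      refine DifferentiableAt.differentiableWithinAt ?_
      refine DifferentiableAt.inv ?_ ?_
      · exact (((contDiff_Mon n _ _).comp (LL n).contDiff).differentiable
          (by simp)).differentiableAt
      · have hLL : LL n ((chartE n σ) x) = psi n σ x.val :=
          ContinuousLinearEquiv.apply_symm_apply _ _
        rw [hLL]
        have hv : x.val = phi n σ (psi n σ x.val) := (phi_psi n σ x.2 hdom).symm
        have hx' : ((phi n σ (psi n σ x.val)) P).rep 0 ≠ 0 := by
          rw [← hv]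
          exact hx
        unfold phi opt at hx'
        rw [if_pos h] at hx'
        obtain ⟨a, ha0, ha1, _⟩ :=
          rep_ptF (Mon n (psi n σ x.val) (σ (eA n P)).val (σ (eB n P)).val)
        rw [ha1] at hx'
        exact fun hM => hx' (by rw [hM, mul_zero])
    · have hfun2 : ((fun x : ↥(FbarSet n) => ((x.val P).rep 1) / ((x.val P).rep 0)) ∘
          ⇑(chartE n σ).symm) =
          fun u => Mon n (LL n u) (σ (eB n P)).val (σ (eA n P)).val := by
        rw [hfun]
        funext u
        rw [ratio10_phi, if_neg h]
      rw [hfun2]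
      exact ((((contDiff_Mon n _ _).comp (LL n).contDiff).differentiable
        (by simp)).differentiableAt).differentiableWithinAt

lemma mdiff01 (P : PairIdx n) :
    (by letI := csF n
        exact MDifferentiableOn (modelWithCornersSelf ℂ (EuclideanSpace ℂ (Fin (n - 3))))
          (modelWithCornersSelf ℂ ℂ)
          (fun x : ↥(FbarSet n) => ((x.val P).rep 0) / ((x.val P).rep 1))
          {x : ↥(FbarSet n) | (x.val P).rep 1 ≠ 0} : Prop) := by
  letI := csF n
  intro x hx
  rw [mdifferentiableWithinAt_iff]
  constructor
  · refine ContinuousOn.continuousWithinAt ?_ hx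
    exact ContinuousOn.comp (g := ratio01)
      (f := fun y : ↥(FbarSet n) => y.val P)
      (t := {p : CP1 | p.rep 1 ≠ 0})
      continuousOn_ratio01
      (((continuous_apply P).comp continuous_subtype_val).continuousOn)
      (fun y hy => hy)
  · simp only [extChartAt_model_space_eq_id, PartialEquiv.refl_coe, extChartAt_coe,
      extChartAt_coe_symm, modelWithCornersSelf_coe, modelWithCornersSelf_coe_symm,
      Set.range_id, Set.inter_univ, Function.comp_id, Function.id_comp,
      CompTriple.comp_eq, Set.preimage_id]
    set σ := chooseSigma n x with hσ
    have hdom : x.val ∈ Dom n σ := chooseSigma_spec n x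
    have hchart : chartAt (EuclideanSpace ℂ (Fin (n - 3))) x = chartE n σ := rfl
    rw [hchart]
    have hfun : ((fun x : ↥(FbarSet n) => ((x.val P).rep 0) / ((x.val P).rep 1)) ∘
        ⇑(chartE n σ).symm) =
        fun u => ratio01 (phi n σ (LL n u) P) := rfl
    by_cases h : (σ (eA n P)).val < (σ (eB n P)).val
    · have hfun2 : ((fun x : ↥(FbarSet n) => ((x.val P).rep 0) / ((x.val P).rep 1)) ∘
          ⇑(chartE n σ).symm) =
          fun u => Mon n (LL n u) (σ (eA n P)).val (σ (eB n P)).val := by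
        rw [hfun]
        funext u
        rw [ratio01_phi, if_pos h]
      rw [hfun2]
      exact ((((contDiff_Mon n _ _).comp (LL n).contDiff).differentiable
        (by simp)).differentiableAt).differentiableWithinAt
    · have hfun2 : ((fun x : ↥(FbarSet n) => ((x.val P).rep 0) / ((x.val P).rep 1)) ∘
          ⇑(chartE n σ).symm) =
          fun u => (Mon n (LL n u) (σ (eB n P)).val (σ (eA n P)).val)⁻¹ := by
        rw [hfun]
        funext u
        rw [ratio01_phi, if_neg h]
      rw [hfun2]
      refine DifferentiableAt.differentiableWithinAt ?_
      refine DifferentiableAt.inv ?_ ?_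
      · exact (((contDiff_Mon n _ _).comp (LL n).contDiff).differentiable
          (by simp)).differentiableAt
      · have hLL : LL n ((chartE n σ) x) = psi n σ x.val :=
          ContinuousLinearEquiv.apply_symm_apply _ _
        rw [hLL]
        have hv : x.val = phi n σ (psi n σ x.val) := (phi_psi n σ x.2 hdom).symm
        have hx' : ((phi n σ (psi n σ x.val)) P).rep 1 ≠ 0 := by
          rw [← hv]
          exact hx
        unfold phi opt at hx'
        rw [if_neg h] at hx'
        obtain ⟨a, ha0, _, ha2⟩ :=
          rep_ptI (Mon n (psi n σ x.val) (σ (eB n P)).val (σ (eA n P)).val)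
        rw [ha2] at hx'
        exact fun hM => hx' (by rw [hM, mul_zero])

end Charts

end
end S4

/-- For `n ≥ 4`, the variety `F̄_n ⊆ (ℂP¹)^N`, `N = C(n-2,2)`, with its
subspace topology, is compact, the inclusion `F̄_n ↪ (ℂP¹)^N` is a (topological)
embedding, and `F̄_n` admits the structure of a complex manifold of complex dimension
`n - 3 = C(n-2,2) - C(n-3,2)` for which the inclusion is holomorphic. -/
theorem statement4 (n : ℕ) (hn : 4 ≤ n) :
    IsCompact (FbarSet n) ∧
    n - 3 = Nat.choose (n - 2) 2 - Nat.choose (n - 3) 2 ∧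
    Topology.IsEmbedding ((↑) : ↥(FbarSet n) → (PairIdx n → CP1)) ∧
    ∃ cs : ChartedSpace (EuclideanSpace ℂ (Fin (n - 3))) ↥(FbarSet n),
      IsComplexManifoldStructureWithHolomorphicInclusion n cs := by
  refine ⟨S4.isCompact_FbarSet n, ?_, Topology.IsEmbedding.subtypeVal, ⟨S4.csF n, ?_⟩⟩
  · have h2 : n - 2 = (n - 3) + 1 := by omega
    rw [h2, Nat.choose_succ_succ (n - 3) 1, Nat.choose_one_right]
    have h3 : Nat.succ 1 = 2 := rfl
    rw [h3]
    omega
  · exact ⟨S4.smooth_csF n, fun P => ⟨S4.mdiff10 n P, S4.mdiff01 n P⟩⟩
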